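/- Let n ≥ 2, let d > 0, w > 0, a ∈ ℝ^{n−2}, and let θ = w/d. Consider the block matrices (indexed so the first coordinate is the vertex being eliminated, the second is the current neighbor, and the remaining n−2 coordinates are the other vertices): X = [[d, −w, −aᵀ], [−w, w, 0ᵀ], [−a, 0, diag(a)]] + E, where E is any n×n matrix supported on the lower-right (n−1)×(n−1) block, and let R = I + (θ/(1−θ))(e_1 − e_2)e_1ᵀ (assuming θ < 1). Then R · Y · Rᵀ = X, where Y = [[d(1−θ)², 0, −(1−θ)aᵀ], [0, w − w²/d, −(w/d)aᵀ], [−(1−θ)a, −(w/d)a, diag(a)]] + E. That is, the single row operation R exactly eliminates the entry corresponding to the edge of weight w, replacing it with the entries of the corresponding elimination star while rescaling the eliminated column by (1−θ). -/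
import Mathlib


open Matrix

set_option maxHeartbeats 1000000 in
/-- Single-edge elimination identity: the row operation
`R = I + (θ/(1-θ))(e₁ - e₂)e₁ᵀ` (with `θ = w/d < 1`) transforms the "eliminated"
matrix `Y` back into `X`, where the blocks are indexed so that the first coordinate
is the vertex being eliminated, the second is the current neighbor, and the
remaining `n` coordinates are the other vertices, and `E` is an arbitrary matrix
supported on the lower-right block (i.e. vanishing on the first row and column). -/
theorem single_edge_elimination {n : ℕ} (d w : ℝ) (hd : 0 < d) (hw : 0 < w)
    (a : Fin n → ℝ) (θ : ℝ) (hθ : θ = w / d) (hθ1 : θ < 1)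
    (E : Matrix (Fin 2 ⊕ Fin n) (Fin 2 ⊕ Fin n) ℝ)
    (hE : ∀ i j, i = Sum.inl 0 ∨ j = Sum.inl 0 → E i j = 0)
    (X Y R : Matrix (Fin 2 ⊕ Fin n) (Fin 2 ⊕ Fin n) ℝ)
    (hX : X = Matrix.fromBlocks !![d, -w; -w, w]
        (Matrix.of fun i l => if i = 0 then -a l else 0)
        (Matrix.of fun k j => if j = 0 then -a k else 0)
        (Matrix.diagonal a) + E)
    (hY : Y = Matrix.fromBlocks !![d * (1 - θ) ^ 2, 0; 0, w - w ^ 2 / d]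
        (Matrix.of fun i l => if i = 0 then -((1 - θ) * a l) else -(w / d * a l))
        (Matrix.of fun k j => if j = 0 then -((1 - θ) * a k) else -(w / d * a k))
        (Matrix.diagonal a) + E)
    (hR : R = 1 + (θ / (1 - θ)) • Matrix.vecMulVec
        (fun k => (if k = Sum.inl 0 then 1 else 0) - (if k = Sum.inl 1 then 1 else 0))
        (fun k => if k = Sum.inl 0 then (1 : ℝ) else 0)) :
    R * Y * Rᵀ = X := by
  have hd' : d ≠ 0 := hd.ne'
  have h1θ : (1 : ℝ) - θ ≠ 0 := by linarith
  have hwd : w < d := by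
    have := (div_lt_one hd).mp (hθ ▸ hθ1)
    linarith
  have hdw : -w + d ≠ 0 := by linarith
  have hdw' : d - w ≠ 0 := by linarith
  have h2 : -(w * d ^ 2) + d ^ 3 ≠ 0 := by
    nlinarith [sq_nonneg d, mul_pos (mul_pos hd hd) (sub_pos.mpr hwd)]
  have h3 : -(w * d) + d ^ 2 ≠ 0 := by nlinarith [mul_pos hd (sub_pos.mpr hwd)]
  have h4 : -(w * d ^ 3 * 2) + w ^ 2 * d ^ 2 + d ^ 4 ≠ 0 := by
    have : -(w * d ^ 3 * 2) + w ^ 2 * d ^ 2 + d ^ 4 = (d * (d - w)) ^ 2 := by ring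
    rw [this]
    exact pow_ne_zero _ (mul_ne_zero hd' (sub_ne_zero.mpr hwd.ne'))
  subst hθ hX hY hR
  ext i j
  simp only [Matrix.mul_apply, Matrix.transpose_apply, Matrix.add_apply,
    Matrix.one_apply, Matrix.smul_apply, Matrix.vecMulVec_apply, smul_eq_mul,
    Fintype.sum_sum_type]
  rcases i with i | i <;> rcases j with j | j <;>
    [(fin_cases i <;> fin_cases j); fin_cases i; fin_cases j; skip] <;>
  ( simp only [Matrix.fromBlocks_apply₁₁, Matrix.fromBlocks_apply₁₂,
      Matrix.fromBlocks_apply₂₁, Matrix.fromBlocks_apply₂₂, Matrix.of_apply,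
      Matrix.cons_val', Matrix.cons_val_zero, Matrix.cons_val_one, Matrix.head_cons,
      Matrix.head_fin_const, Matrix.empty_val', Matrix.cons_val_fin_one,
      Sum.inl.injEq, Sum.inr.injEq, reduceCtorEq, if_true, if_false,
      Matrix.diagonal_apply, Fin.sum_univ_two, Fin.isValue,
      hE _ _ (Or.inl rfl), hE _ _ (Or.inr rfl)]
    simp [hE, Finset.sum_ite_eq, Finset.sum_ite_eq', mul_ite, ite_mul,
      Finset.mul_sum, Finset.sum_sub_distrib, sub_mul, mul_sub] )
  all_goals field_simp [hdw, hdw', h2, h3, h4]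
  all_goals ring
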